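/- There exists a constant C > 0 (independent of δ_s, δ_φ, δ_x and the grids) such that ‖R^{δ_x}_{δ_s,δ_φ} − R_{δ_s,δ_φ}‖ ≤ C · √(1 + δ_x/δ_s) · (δ_x/δ_s), where the norm is the operator norm L²(Ω) → L²(Ω'). (The proof yields C = √(8π).) -/

import Mathlib

open MeasureTheory Real Set Filter

noncomputable section

/-- The unit direction vector `θ(φ) = (cos φ, sin φ)`. -/
def dirv (φ : ℝ) : ℝ × ℝ := (Real.cos φ, Real.sin φ)

/-- The perpendicular direction `θ(φ)^⊥ = (−sin φ, cos φ)`. -/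
def dirp (φ : ℝ) : ℝ × ℝ := (-Real.sin φ, Real.cos φ)

/-- Euclidean inner product on `ℝ²`. -/
def dot2 (x y : ℝ × ℝ) : ℝ := x.1 * y.1 + x.2 * y.2

/-- The open unit disk `Ω = B(0,1) ⊂ ℝ²`. -/
def unitDisk : Set (ℝ × ℝ) := {x : ℝ × ℝ | x.1 ^ 2 + x.2 ^ 2 < 1}

/-- The Radon transform `[R f](s,φ) = ∫ f(s θ(φ) + t θ(φ)^⊥) dt`. -/
def Radon (f : ℝ × ℝ → ℝ) (s φ : ℝ) : ℝ := ∫ t : ℝ, f (s • dirv φ + t • dirp φ)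

/-- The backprojection `[R* g](x) = ∫_{S¹} g(x·θ(φ), φ) dφ`. -/
def Backproj (g : ℝ → ℝ → ℝ) (x : ℝ × ℝ) : ℝ := ∫ φ in Ioc (-π) π, g (dot2 x (dirv φ)) φ

/-- `L²` norm of an image on the plane (for images supported in the unit disk,
this is the `L²(Ω)` norm). -/
def nImg (f : ℝ × ℝ → ℝ) : ℝ := (∫ x : ℝ × ℝ, f x ^ 2) ^ (1/2 : ℝ)

/-- `L²(Ω)` norm of an image restricted to the unit disk. -/
def nImgD (f : ℝ × ℝ → ℝ) : ℝ := (∫ x in unitDisk, f x ^ 2) ^ (1/2 : ℝ)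

/-- `L²(ℝ × S¹)` norm of a sinogram. -/
def nSino (g : ℝ → ℝ → ℝ) : ℝ := (∫ φ in Ioc (-π) π, ∫ s : ℝ, g s φ ^ 2) ^ (1/2 : ℝ)

/-- `L²(Ω')` norm, `Ω' = (−1,1) × S¹`. -/
def nSinoD (g : ℝ → ℝ → ℝ) : ℝ :=
  (∫ φ in Ioc (-π) π, ∫ s in Ioo (-1 : ℝ) 1, g s φ ^ 2) ^ (1/2 : ℝ)

/-- `L²` modulus of continuity of a sinogram: offset shift `h`, angular shift `γ`. -/
def modCont (g : ℝ → ℝ → ℝ) (h γ : ℝ) : ℝ :=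
  (∫ φ in Ioc (-π) π, ∫ s : ℝ, (g (s + h) (φ + γ) - g s φ) ^ 2) ^ (1/2 : ℝ)

/-- `sup_{|h| < r} ω_g(h, 0)`. -/
def supMod (g : ℝ → ℝ → ℝ) (r : ℝ) : ℝ :=
  sSup ((fun h => modCont g h 0) '' Ioo (-r) r)

/-- `f` vanishes outside the unit disk. -/
def SuppDisk (f : ℝ × ℝ → ℝ) : Prop := ∀ x, x ∉ unitDisk → f x = 0

/-- `g` vanishes for offsets outside `(−1, 1)`. -/
def SuppSino (g : ℝ → ℝ → ℝ) : Prop := ∀ s φ, s ∉ Ioo (-1 : ℝ) 1 → g s φ = 0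

/-- `g` is `2π`-periodic in the angular variable, i.e. a function on `ℝ × S¹`. -/
def PeriodicSino (g : ℝ → ℝ → ℝ) : Prop := ∀ s φ, g s (φ + 2 * π) = g s φ

/-- `f ∈ L²(ℝ²)`. -/
def L2Img (f : ℝ × ℝ → ℝ) : Prop := MemLp f 2 (volume : Measure (ℝ × ℝ))

/-- `g ∈ L²(ℝ × S¹)`. -/
def L2Sino (g : ℝ → ℝ → ℝ) : Prop :=
  MemLp (fun z : ℝ × ℝ => g z.1 z.2) 2
    ((volume : Measure (ℝ × ℝ)).restrict (univ ×ˢ Ioc (-π) π))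

/-- The hat profile `w_δ(t) = max(0, δ − |t|)`. -/
def hatw (δ t : ℝ) : ℝ := max 0 (δ - |t|)

/-- Detector centers `s_p = δ_s (p − (P+1)/2)`. -/
def sCen (δs : ℝ) (P p : ℕ) : ℝ := δs * ((p : ℝ) - ((P : ℝ) + 1) / 2)

/-- Detector cells `S_p = s_p + [−δ_s/2, δ_s/2)`. -/
def sCell (δs : ℝ) (P p : ℕ) : Set ℝ := Ico (sCen δs P p - δs / 2) (sCen δs P p + δs / 2)

/-- The detector cells cover `(−1, 1)`. -/
def CoversI (δs : ℝ) (P : ℕ) : Prop := Ioo (-1 : ℝ) 1 ⊆ ⋃ p ∈ Finset.Icc 1 P, sCell δs P p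

/-- Offset-discretized Radon transform `R_{δ_s}`. -/
def RadonS (δs : ℝ) (P : ℕ) (f : ℝ × ℝ → ℝ) (s φ : ℝ) : ℝ :=
  (δs ^ 2)⁻¹ * ∑ p ∈ Finset.Icc 1 P,
    Set.indicator (sCell δs P p) (fun _ => (1 : ℝ)) s *
      ∫ t : ℝ, hatw δs (t - sCen δs P p) * Radon f t φ

/-- The adjoint of `R_{δ_s}`. -/
def RadonSStar (δs : ℝ) (P : ℕ) (g : ℝ → ℝ → ℝ) (x : ℝ × ℝ) : ℝ :=
  (δs ^ 2)⁻¹ * ∑ p ∈ Finset.Icc 1 P,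
    ∫ φ in Ioc (-π) π,
      hatw δs (dot2 x (dirv φ) - sCen δs P p) * ∫ s in sCell δs P p, g s φ

/-- A valid full angular grid `φ_1 < … < φ_Q` in `[−π, π)` with the wrap-around
conventions `φ_0 = φ_Q − 2π` and `φ_{Q+1} = φ_1 + 2π`. -/
structure AngGrid (Q : ℕ) (φs : ℕ → ℝ) : Prop where
  one_le : 1 ≤ Q
  mono : ∀ q, 1 ≤ q → q < Q → φs q < φs (q + 1)
  mem : ∀ q, 1 ≤ q → q ≤ Q → φs q ∈ Ico (-π) π
  wrap0 : φs 0 = φs Q - 2 * π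
  wrapQ : φs (Q + 1) = φs 1 + 2 * π

/-- `δφ` bounds all angular gaps of the grid (it holds for `δφ` the maximal gap). -/
def GapLe (Q : ℕ) (φs : ℕ → ℝ) (δφ : ℝ) : Prop :=
  ∀ q, 1 ≤ q → q ≤ Q → φs (q + 1) - φs q ≤ δφ

/-- The angular cell `Θ_q`, taken modulo `2π`. -/
def angCell (φs : ℕ → ℝ) (q : ℕ) : Set ℝ :=
  {φ : ℝ | ∃ k : ℤ, φ + 2 * π * (k : ℝ) ∈
    Ico ((φs (q - 1) + φs q) / 2) ((φs q + φs (q + 1)) / 2)}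

/-- Offset- and angle-discretized Radon transform `R_{δ_s, δ_φ}`. -/
def RadonSA (δs : ℝ) (P Q : ℕ) (φs : ℕ → ℝ) (f : ℝ × ℝ → ℝ) (s φ : ℝ) : ℝ :=
  (δs ^ 2)⁻¹ * ∑ q ∈ Finset.Icc 1 Q, ∑ p ∈ Finset.Icc 1 P,
    Set.indicator (sCell δs P p) (fun _ => (1 : ℝ)) s *
    Set.indicator (angCell φs q) (fun _ => (1 : ℝ)) φ *
    ∫ x in unitDisk, hatw δs (dot2 x (dirv (φs q)) - sCen δs P p) * f x

/-- Pixel centers `x_{ij}`. -/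
def pixCen (δx : ℝ) (N M i j : ℕ) : ℝ × ℝ :=
  (δx * ((i : ℝ) - ((N : ℝ) + 1) / 2), δx * ((j : ℝ) - ((M : ℝ) + 1) / 2))

/-- Pixels `X_{ij} = x_{ij} + [−δ_x/2, δ_x/2)²`. -/
def pixCell (δx : ℝ) (N M i j : ℕ) : Set (ℝ × ℝ) :=
  Ico ((pixCen δx N M i j).1 - δx / 2) ((pixCen δx N M i j).1 + δx / 2) ×ˢ
    Ico ((pixCen δx N M i j).2 - δx / 2) ((pixCen δx N M i j).2 + δx / 2)

/-- The pixels cover the unit disk. -/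
def CoversDisk (δx : ℝ) (N M : ℕ) : Prop :=
  unitDisk ⊆ ⋃ i ∈ Finset.Icc 1 N, ⋃ j ∈ Finset.Icc 1 M, pixCell δx N M i j

/-- The fully discrete (pixel-driven) Radon transform `R^{δ_x}_{δ_s, δ_φ}`. -/
def RadonFull (δs : ℝ) (P Q : ℕ) (φs : ℕ → ℝ) (δx : ℝ) (N M : ℕ)
    (f : ℝ × ℝ → ℝ) (s φ : ℝ) : ℝ :=
  (δs ^ 2)⁻¹ * ∑ q ∈ Finset.Icc 1 Q, ∑ p ∈ Finset.Icc 1 P,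
    Set.indicator (sCell δs P p) (fun _ => (1 : ℝ)) s *
    Set.indicator (angCell φs q) (fun _ => (1 : ℝ)) φ *
    ∑ i ∈ Finset.Icc 1 N, ∑ j ∈ Finset.Icc 1 M,
      hatw δs (dot2 (pixCen δx N M i j) (dirv (φs q)) - sCen δs P p) *
        ∫ x in pixCell δx N M i j, f x

/-- The adjoint of the fully discrete Radon transform (pixel-driven backprojection). -/
def RadonFullStar (δs : ℝ) (P Q : ℕ) (φs : ℕ → ℝ) (δx : ℝ) (N M : ℕ)
    (g : ℝ → ℝ → ℝ) (x : ℝ × ℝ) : ℝ :=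
  ∑ i ∈ Finset.Icc 1 N, ∑ j ∈ Finset.Icc 1 M,
    Set.indicator (pixCell δx N M i j) (fun _ => (1 : ℝ)) x *
    ((δs ^ 2)⁻¹ * ∑ q ∈ Finset.Icc 1 Q, ∑ p ∈ Finset.Icc 1 P,
      hatw δs (dot2 (pixCen δx N M i j) (dirv (φs q)) - sCen δs P p) *
        ∫ φ in Ico ((φs (q - 1) + φs q) / 2) ((φs q + φs (q + 1)) / 2),
          ∫ s in sCell δs P p, g s φ)

/- ---------- sparse / limited angle ---------- -/

/-- Limited-angle angular grid on `A = (φ_1, φ_Q)` with `φ_0 = φ_1`, `φ_{Q+1} = φ_Q`. -/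
structure AngGridA (Q : ℕ) (φs : ℕ → ℝ) : Prop where
  two_le : 2 ≤ Q
  mono : ∀ q, 1 ≤ q → q < Q → φs q < φs (q + 1)
  mem : ∀ q, 1 ≤ q → q ≤ Q → φs q ∈ Ico (-π) π
  wrap0 : φs 0 = φs 1
  wrapQ : φs (Q + 1) = φs Q

/-- `L²(Ω'_A)` norm, `Ω'_A = (−1,1) × A` with `A = (a,b)`. -/
def nSinoA (a b : ℝ) (g : ℝ → ℝ → ℝ) : ℝ :=
  (∫ φ in Ioo a b, ∫ s in Ioo (-1 : ℝ) 1, g s φ ^ 2) ^ (1/2 : ℝ)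

/-- Limited-angle backprojection `(R^A)*`. -/
def BackprojA (a b : ℝ) (g : ℝ → ℝ → ℝ) (x : ℝ × ℝ) : ℝ :=
  ∫ φ in Ioo a b, g (dot2 x (dirv φ)) φ

/-- `g ∈ L²((−1,1) × A)` (as a function on `ℝ × A`). -/
def L2SinoA (a b : ℝ) (g : ℝ → ℝ → ℝ) : Prop :=
  MemLp (fun z : ℝ × ℝ => g z.1 z.2) 2
    ((volume : Measure (ℝ × ℝ)).restrict (univ ×ˢ Ioo a b))

/-- limited-angle modulus of continuity `ω_g(h, 0)` on `ℝ × A`. -/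
def modContA (a b : ℝ) (g : ℝ → ℝ → ℝ) (h : ℝ) : ℝ :=
  (∫ φ in Ioo a b, ∫ s : ℝ, (g (s + h) φ - g s φ) ^ 2) ^ (1/2 : ℝ)

/-- Sparse-angle `L²(Ω'_F)` norm (counting measure in the angular direction). -/
def nSinoF (Q : ℕ) (φs : ℕ → ℝ) (g : ℝ → ℝ → ℝ) : ℝ :=
  (∑ q ∈ Finset.Icc 1 Q, ∫ s in Ioo (-1 : ℝ) 1, g s (φs q) ^ 2) ^ (1/2 : ℝ)

/-- Sparse-angle modulus of continuity `ω_g(h, 0)`. -/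
def modContF (Q : ℕ) (φs : ℕ → ℝ) (g : ℝ → ℝ → ℝ) (h : ℝ) : ℝ :=
  (∑ q ∈ Finset.Icc 1 Q, ∫ s : ℝ, (g (s + h) (φs q) - g s (φs q)) ^ 2) ^ (1/2 : ℝ)

/-- Sparse-angle backprojection `(R^F)* g (x) = Σ_q g(x·θ_q, φ_q)`. -/
def BackprojF (Q : ℕ) (φs : ℕ → ℝ) (g : ℝ → ℝ → ℝ) (x : ℝ × ℝ) : ℝ :=
  ∑ q ∈ Finset.Icc 1 Q, g (dot2 x (dirv (φs q))) (φs q)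

/-- The discrete sparse-angle Radon transform at a single angle `θang`. -/
def RadonSparse (δs : ℝ) (P : ℕ) (δx : ℝ) (N M : ℕ) (θang : ℝ)
    (f : ℝ × ℝ → ℝ) (s : ℝ) : ℝ :=
  (δs ^ 2)⁻¹ * ∑ p ∈ Finset.Icc 1 P,
    Set.indicator (sCell δs P p) (fun _ => (1 : ℝ)) s *
    ∑ i ∈ Finset.Icc 1 N, ∑ j ∈ Finset.Icc 1 M,
      hatw δs (dot2 (pixCen δx N M i j) (dirv θang) - sCen δs P p) *
        ∫ x in pixCell δx N M i j, f x

/-- Adjoint of the discrete sparse-angle Radon transform. -/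
def RadonSparseStar (δs : ℝ) (P : ℕ) (δx : ℝ) (N M Q : ℕ) (φs : ℕ → ℝ)
    (g : ℝ → ℝ → ℝ) (x : ℝ × ℝ) : ℝ :=
  ∑ i ∈ Finset.Icc 1 N, ∑ j ∈ Finset.Icc 1 M,
    Set.indicator (pixCell δx N M i j) (fun _ => (1 : ℝ)) x *
    ((δs ^ 2)⁻¹ * ∑ q ∈ Finset.Icc 1 Q, ∑ p ∈ Finset.Icc 1 P,
      hatw δs (dot2 (pixCen δx N M i j) (dirv (φs q)) - sCen δs P p) *
        ∫ s in sCell δs P p, g s (φs q))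

/- ---------- fanbeam ---------- -/

/-- Detector width `W = 2R/√(R_E² − 1)`. -/
def Wfan (RE R : ℝ) : ℝ := 2 * R / Real.sqrt (RE ^ 2 - 1)

/-- The fanbeam transform `F`. -/
def Fanbeam (RE R : ℝ) (f : ℝ × ℝ → ℝ) (ξ α : ℝ) : ℝ :=
  Real.sqrt (ξ ^ 2 + R ^ 2) *
    ∫ t : ℝ, f (t • (ξ • dirv α + R • dirp α) - RE • dirp α)

/-- The unweighted fanbeam transform `G`. -/
def GFan (RE R : ℝ) (f : ℝ × ℝ → ℝ) (ξ α : ℝ) : ℝ :=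
  ∫ t : ℝ, f (t • (ξ • dirv α + R • dirp α) - RE • dirp α)

/-- Fan projection coordinate `ξ(x, α) = x·θ(α) R / (x·θ(α)^⊥ + R_E)`. -/
def fanProj (RE R : ℝ) (x : ℝ × ℝ) (α : ℝ) : ℝ :=
  dot2 x (dirv α) * R / (dot2 x (dirp α) + RE)

/-- Adjoint `G*` of the unweighted fanbeam transform. -/
def GFanStar (RE R : ℝ) (g : ℝ → ℝ → ℝ) (x : ℝ × ℝ) : ℝ :=
  ∫ α in Ioc (-π) π, (dot2 x (dirp α) + RE)⁻¹ * g (fanProj RE R x α) α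

/-- Adjoint `F*` of the fanbeam transform. -/
def FanbeamStar (RE R : ℝ) (g : ℝ → ℝ → ℝ) (x : ℝ × ℝ) : ℝ :=
  ∫ α in Ioc (-π) π,
    Real.sqrt (fanProj RE R x α ^ 2 + R ^ 2) * (dot2 x (dirp α) + RE)⁻¹ *
      g (fanProj RE R x α) α

/-- `L²(Ω')` norm for the fanbeam geometry, `Ω' = (−W/2, W/2) × S¹`. -/
def nSinoW (RE R : ℝ) (g : ℝ → ℝ → ℝ) : ℝ :=
  (∫ α in Ioc (-π) π, ∫ ξ in Ioo (-(Wfan RE R) / 2) (Wfan RE R / 2), g ξ α ^ 2) ^ (1/2 : ℝ)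

/-- `g` vanishes for offsets outside `(−W/2, W/2)`. -/
def SuppSinoW (RE R : ℝ) (g : ℝ → ℝ → ℝ) : Prop :=
  ∀ ξ α, ξ ∉ Ioo (-(Wfan RE R) / 2) (Wfan RE R / 2) → g ξ α = 0

/-- `g ∈ L²((−W/2, W/2) × S¹)`. -/
def L2SinoW (RE R : ℝ) (g : ℝ → ℝ → ℝ) : Prop :=
  MemLp (fun z : ℝ × ℝ => g z.1 z.2) 2
    ((volume : Measure (ℝ × ℝ)).restrict
      (Ioo (-(Wfan RE R) / 2) (Wfan RE R / 2) ×ˢ Ioc (-π) π))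

/-- Offset-discretized unweighted fanbeam transform `G_{δ_ξ}`, `δ_ξ = W/P`. -/
def GFanS (RE R : ℝ) (P : ℕ) (f : ℝ × ℝ → ℝ) (ξ α : ℝ) : ℝ :=
  ((Wfan RE R / P) ^ 2)⁻¹ * ∑ p ∈ Finset.Icc 1 P,
    Set.indicator (sCell (Wfan RE R / P) P p) (fun _ => (1 : ℝ)) ξ *
      ∫ x in unitDisk,
        hatw (Wfan RE R / P) (fanProj RE R x α - sCen (Wfan RE R / P) P p) *
          f x / (dot2 x (dirp α) + RE)

/-- Adjoint of `G_{δ_ξ}`. -/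
def GFanSStar (RE R : ℝ) (P : ℕ) (g : ℝ → ℝ → ℝ) (x : ℝ × ℝ) : ℝ :=
  ((Wfan RE R / P) ^ 2)⁻¹ * ∑ p ∈ Finset.Icc 1 P,
    ∫ α in Ioc (-π) π,
      hatw (Wfan RE R / P) (fanProj RE R x α - sCen (Wfan RE R / P) P p) *
        (dot2 x (dirp α) + RE)⁻¹ *
        ∫ ξ in sCell (Wfan RE R / P) P p, g ξ α

/-- Offset- and angle-discretized `G_{δ_ξ, δ_α}`. -/
def GFanSA (RE R : ℝ) (P Q : ℕ) (αs : ℕ → ℝ) (f : ℝ × ℝ → ℝ) (ξ α : ℝ) : ℝ :=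
  ((Wfan RE R / P) ^ 2)⁻¹ * ∑ p ∈ Finset.Icc 1 P, ∑ q ∈ Finset.Icc 1 Q,
    Set.indicator (sCell (Wfan RE R / P) P p) (fun _ => (1 : ℝ)) ξ *
    Set.indicator (angCell αs q) (fun _ => (1 : ℝ)) α *
      ∫ x in unitDisk,
        hatw (Wfan RE R / P) (fanProj RE R x (αs q) - sCen (Wfan RE R / P) P p) *
          f x / (dot2 x (dirp (αs q)) + RE)

/-- Fully discrete unweighted fanbeam transform `G^{δ_x}_{δ_ξ, δ_α}`. -/
def GFanFull (RE R : ℝ) (P Q : ℕ) (αs : ℕ → ℝ) (δx : ℝ) (N M : ℕ)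
    (f : ℝ × ℝ → ℝ) (ξ α : ℝ) : ℝ :=
  ((Wfan RE R / P) ^ 2)⁻¹ * ∑ p ∈ Finset.Icc 1 P, ∑ q ∈ Finset.Icc 1 Q,
    Set.indicator (sCell (Wfan RE R / P) P p) (fun _ => (1 : ℝ)) ξ *
    Set.indicator (angCell αs q) (fun _ => (1 : ℝ)) α *
    ∑ i ∈ Finset.Icc 1 N, ∑ j ∈ Finset.Icc 1 M,
      hatw (Wfan RE R / P)
          (fanProj RE R (pixCen δx N M i j) (αs q) - sCen (Wfan RE R / P) P p) *
        (dot2 (pixCen δx N M i j) (dirp (αs q)) + RE)⁻¹ *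
        ∫ x in pixCell δx N M i j, f x

/-- Fully discrete pixel-driven fanbeam transform `F^{δ_x}_{δ_ξ, δ_α}`. -/
def FanFull (RE R : ℝ) (P Q : ℕ) (αs : ℕ → ℝ) (δx : ℝ) (N M : ℕ)
    (f : ℝ × ℝ → ℝ) (ξ α : ℝ) : ℝ :=
  ((Wfan RE R / P) ^ 2)⁻¹ * ∑ p ∈ Finset.Icc 1 P, ∑ q ∈ Finset.Icc 1 Q,
    Set.indicator (sCell (Wfan RE R / P) P p) (fun _ => (1 : ℝ)) ξ *
    Set.indicator (angCell αs q) (fun _ => (1 : ℝ)) α *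
    Real.sqrt (sCen (Wfan RE R / P) P p ^ 2 + R ^ 2) *
    ∑ i ∈ Finset.Icc 1 N, ∑ j ∈ Finset.Icc 1 M,
      hatw (Wfan RE R / P)
          (fanProj RE R (pixCen δx N M i j) (αs q) - sCen (Wfan RE R / P) P p) *
        (dot2 (pixCen δx N M i j) (dirp (αs q)) + RE)⁻¹ *
        ∫ x in pixCell δx N M i j, f x

/-- Adjoint of the fully discrete pixel-driven fanbeam transform. -/
def FanFullStar (RE R : ℝ) (P Q : ℕ) (αs : ℕ → ℝ) (δx : ℝ) (N M : ℕ)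
    (g : ℝ → ℝ → ℝ) (x : ℝ × ℝ) : ℝ :=
  ∑ i ∈ Finset.Icc 1 N, ∑ j ∈ Finset.Icc 1 M,
    Set.indicator (pixCell δx N M i j) (fun _ => (1 : ℝ)) x *
    (((Wfan RE R / P) ^ 2)⁻¹ * ∑ q ∈ Finset.Icc 1 Q, ∑ p ∈ Finset.Icc 1 P,
      hatw (Wfan RE R / P)
          (fanProj RE R (pixCen δx N M i j) (αs q) - sCen (Wfan RE R / P) P p) *
        Real.sqrt (sCen (Wfan RE R / P) P p ^ 2 + R ^ 2) *
        (dot2 (pixCen δx N M i j) (dirp (αs q)) + RE)⁻¹ *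
        ∫ α in Ico ((αs (q - 1) + αs q) / 2) ((αs q + αs (q + 1)) / 2),
          ∫ ξ in sCell (Wfan RE R / P) P p, g ξ α)


/- ======================= auxiliary lemmas for Statement 5 ======================= -/

section Aux

lemma aux_hatw_nonneg (δ t : ℝ) : 0 ≤ hatw δ t := le_max_left _ _

lemma aux_hatw_le {δ : ℝ} (hδ : 0 ≤ δ) (t : ℝ) : hatw δ t ≤ δ := by
  have := abs_nonneg t
  exact max_le hδ (by linarith)

lemma aux_hatw_zero {δ t : ℝ} (h : δ ≤ |t|) : hatw δ t = 0 :=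
  max_eq_left (by linarith)

lemma aux_hatw_lip (δ a b : ℝ) : |hatw δ a - hatw δ b| ≤ |a - b| := by
  have h1 : |hatw δ a - hatw δ b| ≤ |(δ - |a|) - (δ - |b|)| := by
    unfold hatw
    rw [max_comm 0 (δ - |a|), max_comm 0 (δ - |b|)]
    exact abs_max_sub_max_le_abs _ _ _
  have h2 : (δ - |a|) - (δ - |b|) = |b| - |a| := by ring
  rw [h2] at h1
  calc |hatw δ a - hatw δ b| ≤ |(|b| - |a|)| := h1
    _ ≤ |b - a| := abs_abs_sub_abs_le_abs_sub _ _
    _ = |a - b| := abs_sub_comm _ _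

lemma aux_hatw_diff {δ : ℝ} (hδ : 0 ≤ δ) (a b : ℝ) :
    |hatw δ a - hatw δ b| ≤ min (|a - b|) δ := by
  refine le_min (aux_hatw_lip δ a b) ?_
  have h1 := aux_hatw_nonneg δ a
  have h2 := aux_hatw_nonneg δ b
  have h3 := aux_hatw_le hδ a
  have h4 := aux_hatw_le hδ b
  rw [abs_le]; constructor <;> linarith

lemma aux_ico_disj {δ c c' x : ℝ} (h : δ ≤ |c - c'|)
    (hx : x ∈ Ico (c - δ/2) (c + δ/2)) (hx' : x ∈ Ico (c' - δ/2) (c' + δ/2)) : False := by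
  rw [mem_Ico] at hx hx'
  rcases abs_cases (c - c') with ⟨h1, _⟩ | ⟨h1, _⟩ <;>
    [skip; skip] <;> linarith [hx.1, hx.2, hx'.1, hx'.2]

lemma aux_sum_ind_le_one {ι α : Type*} (t : Finset ι) (S : ι → Set α) (x : α)
    (h : ∀ p ∈ t, ∀ p' ∈ t, x ∈ S p → x ∈ S p' → p = p') :
    ∑ p ∈ t, (S p).indicator (fun _ => (1 : ℝ)) x ≤ 1 := by
  classical
  have heq : ∑ p ∈ t, (S p).indicator (fun _ => (1 : ℝ)) x
      = ((t.filter fun p => x ∈ S p).card : ℝ) := by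
    rw [Finset.card_filter]
    push_cast
    refine Finset.sum_congr rfl fun p _ => ?_
    by_cases hx : x ∈ S p <;> simp [Set.indicator_apply, hx]
  rw [heq]
  have hcard : (t.filter fun p => x ∈ S p).card ≤ 1 := by
    refine Finset.card_le_one.mpr fun a ha b hb => ?_
    rw [Finset.mem_filter] at ha hb
    exact h a ha.1 b hb.1 ha.2 hb.2
  exact_mod_cast hcard

lemma aux_ind_nonneg {α : Type*} (S : Set α) (x : α) :
    0 ≤ S.indicator (fun _ => (1 : ℝ)) x :=
  Set.indicator_nonneg (fun _ _ => zero_le_one) x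

lemma aux_nat_dist {p p' : ℕ} (h : p ≠ p') : (1 : ℝ) ≤ |(p : ℝ) - (p' : ℝ)| := by
  rcases Nat.lt_or_ge p p' with hlt | hge
  · have h2 : (p : ℝ) + 1 ≤ (p' : ℝ) := by exact_mod_cast hlt
    rw [abs_sub_comm, abs_of_nonneg (by linarith)]; linarith
  · have hlt : p' < p := lt_of_le_of_ne hge (Ne.symm h)
    have h2 : (p' : ℝ) + 1 ≤ (p : ℝ) := by exact_mod_cast hlt
    rw [abs_of_nonneg (by linarith)]; linarith

lemma aux_grid_dist {δ : ℝ} (hδ : 0 < δ) {p p' : ℕ} (c : ℝ) (h : p ≠ p') :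
    δ ≤ |δ * ((p : ℝ) - c) - δ * ((p' : ℝ) - c)| := by
  have h1 := aux_nat_dist h
  rw [show δ * ((p : ℝ) - c) - δ * ((p' : ℝ) - c) = δ * ((p : ℝ) - p') by ring,
    abs_mul, abs_of_pos hδ]
  nlinarith

lemma aux_sCen_dist {δs : ℝ} (hδs : 0 < δs) (P : ℕ) {p p' : ℕ} (h : p ≠ p') :
    δs ≤ |sCen δs P p - sCen δs P p'| :=
  aux_grid_dist hδs _ h

lemma aux_sCell_sum_le_one {δs : ℝ} (hδs : 0 < δs) (P : ℕ) (s : ℝ) :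
    ∑ p ∈ Finset.Icc 1 P, (sCell δs P p).indicator (fun _ => (1 : ℝ)) s ≤ 1 := by
  refine aux_sum_ind_le_one _ _ _ fun p _ p' _ hp hp' => ?_
  by_contra hne
  exact aux_ico_disj (aux_sCen_dist hδs P hne) hp hp'

lemma aux_sCell_integral {δs : ℝ} (hδs : 0 < δs) (P p : ℕ) :
    ∫ s in Ioo (-1 : ℝ) 1, (sCell δs P p).indicator (fun _ => (1 : ℝ)) s ≤ δs := by
  rw [MeasureTheory.setIntegral_indicator
    (show MeasurableSet (sCell δs P p) from measurableSet_Ico)]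
  rw [MeasureTheory.setIntegral_const, smul_eq_mul, mul_one]
  have h1 : volume (Ioo (-1 : ℝ) 1 ∩ sCell δs P p) ≤ ENNReal.ofReal δs := by
    refine le_trans (measure_mono inter_subset_right) ?_
    rw [show sCell δs P p = Ico (sCen δs P p - δs/2) (sCen δs P p + δs/2) from rfl,
      Real.volume_Ico]
    exact ENNReal.ofReal_le_ofReal (by linarith)
  exact ENNReal.toReal_le_of_le_ofReal hδs.le h1

lemma aux_ang_sum_le_one {Q : ℕ} {φs : ℕ → ℝ} (hang : AngGrid Q φs) (φ : ℝ) :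
    ∑ q ∈ Finset.Icc 1 Q, (angCell φs q).indicator (fun _ => (1 : ℝ)) φ ≤ 1 := by
  have hπ := Real.pi_pos
  have hstep : ∀ q, q ≤ Q → φs q ≤ φs (q + 1) := by
    intro q hq
    rcases Nat.eq_zero_or_pos q with rfl | hq1
    · rw [hang.wrap0]
      have h1 := (hang.mem Q hang.one_le le_rfl).2
      have h2 := (hang.mem 1 le_rfl hang.one_le).1
      simp only [zero_add]
      linarith
    · rcases lt_or_eq_of_le hq with hlt | rfl
      · exact (hang.mono q hq1 hlt).le
      · rw [hang.wrapQ]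
        have h1 := (hang.mem q hq1 le_rfl).2
        have h2 := (hang.mem 1 le_rfl hq1).1
        linarith
  have hmono : ∀ b, b ≤ Q + 1 → ∀ a, a ≤ b → φs a ≤ φs b := by
    intro b
    induction b with
    | zero => intro _ a ha; rw [Nat.le_zero.mp ha]
    | succ n ih =>
      intro hb a ha
      rcases eq_or_lt_of_le ha with rfl | hlt
      · rfl
      · exact le_trans (ih (by omega) a (by omega)) (hstep n (by omega))
  set mp : ℕ → ℝ := fun q => (φs q + φs (q + 1)) / 2 with hmp
  have hmpmono : ∀ a b, a ≤ b → b ≤ Q → mp a ≤ mp b := by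
    intro a b hab hb
    have h1 : φs a ≤ φs b := hmono b (by omega) a hab
    have h2 : φs (a + 1) ≤ φs (b + 1) := hmono (b + 1) (by omega) (a + 1) (by omega)
    simp only [hmp]; linarith
  have hperiod : mp Q = mp 0 + 2 * π := by
    simp only [hmp, zero_add]
    rw [hang.wrapQ, hang.wrap0]; ring
  refine aux_sum_ind_le_one _ _ _ fun q hq q' hq' hmem hmem' => ?_
  rw [Finset.mem_Icc] at hq hq'
  obtain ⟨k, hk⟩ := hmem
  obtain ⟨k', hk'⟩ := hmem'
  have hq1 : q - 1 + 1 = q := by omega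
  have hq1' : q' - 1 + 1 = q' := by omega
  have e1 : mp (q - 1) = (φs (q - 1) + φs q) / 2 := by simp only [hmp]; rw [hq1]
  have e1' : mp (q' - 1) = (φs (q' - 1) + φs q') / 2 := by simp only [hmp]; rw [hq1']
  have e2 : mp q = (φs q + φs (q + 1)) / 2 := rfl
  have e2' : mp q' = (φs q' + φs (q' + 1)) / 2 := rfl
  rw [← e1, ← e2] at hk
  rw [← e1', ← e2'] at hk'
  rw [mem_Ico] at hk hk'
  have hx1 : mp 0 ≤ φ + 2 * π * k :=
    le_trans (hmpmono 0 (q - 1) (Nat.zero_le _) (by omega)) hk.1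
  have hx2 : φ + 2 * π * k < mp 0 + 2 * π := by
    rw [← hperiod]; exact lt_of_lt_of_le hk.2 (hmpmono q Q hq.2 le_rfl)
  have hx1' : mp 0 ≤ φ + 2 * π * k' :=
    le_trans (hmpmono 0 (q' - 1) (Nat.zero_le _) (by omega)) hk'.1
  have hx2' : φ + 2 * π * k' < mp 0 + 2 * π := by
    rw [← hperiod]; exact lt_of_lt_of_le hk'.2 (hmpmono q' Q hq'.2 le_rfl)
  have hkk : k = k' := by
    have h3 : |(k : ℝ) - (k' : ℝ)| < 1 := by
      rw [abs_lt]; constructor <;> nlinarith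
    have h4 : |((k - k' : ℤ) : ℝ)| < 1 := by push_cast; exact h3
    rw [← Int.cast_abs] at h4
    have h5 : |k - k'| < 1 := by exact_mod_cast h4
    have h6 := abs_lt.mp h5
    omega
  subst hkk
  by_contra hne
  rcases lt_or_gt_of_ne hne with hlt | hlt
  · have hle : mp q ≤ mp (q' - 1) := hmpmono q (q' - 1) (by omega) (by omega)
    linarith [hk.2, hk'.1]
  · have hle : mp q' ≤ mp (q - 1) := hmpmono q' (q - 1) (by omega) (by omega)
    linarith [hk'.2, hk.1]

lemma aux_angCell_meas (φs : ℕ → ℝ) (q : ℕ) : MeasurableSet (angCell φs q) := by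
  have h : angCell φs q = ⋃ k : ℤ, (fun φ => φ + 2 * π * (k : ℝ)) ⁻¹'
      (Ico ((φs (q - 1) + φs q) / 2) ((φs q + φs (q + 1)) / 2)) := by
    ext φ
    simp only [angCell, Set.mem_setOf_eq, Set.mem_iUnion, Set.mem_preimage]
  rw [h]
  exact MeasurableSet.iUnion fun k =>
    measurableSet_Ico.preimage (measurable_id.add_const _)

lemma aux_unitDisk_meas : MeasurableSet unitDisk := by
  have h : unitDisk = {x : ℝ × ℝ | x.1 ^ 2 + x.2 ^ 2 < 1} := rfl
  rw [h]
  exact measurableSet_lt (by fun_prop) measurable_const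

lemma aux_unitDisk_vol : volume unitDisk < ⊤ := by
  have hsub : unitDisk ⊆ Ioo (-1 : ℝ) 1 ×ˢ Ioo (-1 : ℝ) 1 := by
    intro x hx
    have hx' : x.1 ^ 2 + x.2 ^ 2 < 1 := hx
    constructor <;> (rw [mem_Ioo]; constructor <;> nlinarith [sq_nonneg x.1, sq_nonneg x.2])
  refine lt_of_le_of_lt (measure_mono hsub) ?_
  rw [MeasureTheory.Measure.volume_eq_prod, MeasureTheory.Measure.prod_prod, Real.volume_Ioo]
  exact ENNReal.mul_lt_top ENNReal.ofReal_lt_top ENNReal.ofReal_lt_top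

lemma aux_stripset_meas (c s' s w : ℝ) :
    MeasurableSet {x : ℝ × ℝ | |c * x.1 + s' * x.2 - s| < w ∧ x ∈ unitDisk} := by
  have h : {x : ℝ × ℝ | |c * x.1 + s' * x.2 - s| < w ∧ x ∈ unitDisk}
      = ((fun x : ℝ × ℝ => c * x.1 + s' * x.2 - s) ⁻¹' (Ioo (-w) w)) ∩ unitDisk := by
    ext x
    simp only [Set.mem_setOf_eq, Set.mem_inter_iff, Set.mem_preimage, Set.mem_Ioo, abs_lt]
  rw [h]
  exact (measurableSet_Ioo.preimage (by fun_prop)).inter aux_unitDisk_meas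

lemma aux_strip_core {c s' s w : ℝ} (hw : 0 ≤ w) (hs' : (1 : ℝ)/4 ≤ s' ^ 2) :
    volume {x : ℝ × ℝ | |c * x.1 + s' * x.2 - s| < w ∧ x ∈ unitDisk}
      ≤ ENNReal.ofReal (8 * w) := by
  have hs'0 : s' ≠ 0 := by intro h; rw [h] at hs'; norm_num at hs'
  have habs : (1 : ℝ)/2 ≤ |s'| := by nlinarith [abs_nonneg s', sq_abs s']
  have hinv : |s'⁻¹| ≤ 2 := by
    rw [abs_inv]
    rw [inv_le_comm₀ (by linarith) (by norm_num)]
    linarith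
  rw [MeasureTheory.Measure.volume_eq_prod,
    MeasureTheory.Measure.prod_apply (aux_stripset_meas c s' s w)]
  have hfib : ∀ a : ℝ,
      volume (Prod.mk a ⁻¹' {x : ℝ × ℝ | |c * x.1 + s' * x.2 - s| < w ∧ x ∈ unitDisk})
        ≤ (Ioo (-1 : ℝ) 1).indicator (fun _ => ENNReal.ofReal (4 * w)) a := by
    intro a
    by_cases ha : a ∈ Ioo (-1 : ℝ) 1
    · rw [Set.indicator_of_mem ha]
      have hsub : Prod.mk a ⁻¹' {x : ℝ × ℝ | |c * x.1 + s' * x.2 - s| < w ∧ x ∈ unitDisk}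
          ⊆ (fun b => s' * b) ⁻¹' Ioo (s - c * a - w) (s - c * a + w) := by
        intro b hb
        simp only [Set.mem_preimage, Set.mem_setOf_eq] at hb
        rcases abs_lt.mp hb.1 with ⟨h1, h2⟩
        simp only [Set.mem_preimage, Set.mem_Ioo]
        constructor <;> linarith
      refine le_trans (measure_mono hsub) ?_
      rw [Real.volume_preimage_mul_left hs'0, Real.volume_Ioo,
        show (s - c * a + w) - (s - c * a - w) = 2 * w by ring,
        ← ENNReal.ofReal_mul (abs_nonneg _)]
      exact ENNReal.ofReal_le_ofReal (by nlinarith [abs_nonneg s'⁻¹])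
    · rw [Set.indicator_of_notMem ha]
      have hempty : Prod.mk a ⁻¹'
          {x : ℝ × ℝ | |c * x.1 + s' * x.2 - s| < w ∧ x ∈ unitDisk} = ∅ := by
        ext b
        simp only [Set.mem_preimage, Set.mem_setOf_eq, Set.mem_empty_iff_false, iff_false,
          not_and]
        intro _ hb2
        have hdisk : a ^ 2 + b ^ 2 < 1 := hb2
        exact ha (by rw [mem_Ioo]; constructor <;> nlinarith [sq_nonneg b])
      rw [hempty]
      simp
  calc (∫⁻ a, volume (Prod.mk a ⁻¹'
        {x : ℝ × ℝ | |c * x.1 + s' * x.2 - s| < w ∧ x ∈ unitDisk}))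
      ≤ ∫⁻ a, (Ioo (-1 : ℝ) 1).indicator (fun _ => ENNReal.ofReal (4 * w)) a :=
        MeasureTheory.lintegral_mono hfib
    _ = ENNReal.ofReal (4 * w) * volume (Ioo (-1 : ℝ) 1) := by
        rw [MeasureTheory.lintegral_indicator measurableSet_Ioo,
          MeasureTheory.setLIntegral_const]
    _ ≤ ENNReal.ofReal (8 * w) := by
        rw [Real.volume_Ioo, ← ENNReal.ofReal_mul (by linarith)]
        exact ENNReal.ofReal_le_ofReal (by nlinarith)

lemma aux_strip_vol (φ s w : ℝ) (hw : 0 ≤ w) :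
    volume {x : ℝ × ℝ | |dot2 x (dirv φ) - s| < w ∧ x ∈ unitDisk}
      ≤ ENNReal.ofReal (8 * w) := by
  have hpyth : Real.sin φ ^ 2 + Real.cos φ ^ 2 = 1 := Real.sin_sq_add_cos_sq φ
  have hd : ∀ x : ℝ × ℝ, dot2 x (dirv φ) = Real.cos φ * x.1 + Real.sin φ * x.2 := by
    intro x; simp only [dot2, dirv]; ring
  rcases le_or_gt ((1 : ℝ)/4) (Real.sin φ ^ 2) with hcase | hcase
  · have he : {x : ℝ × ℝ | |dot2 x (dirv φ) - s| < w ∧ x ∈ unitDisk}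
        = {x : ℝ × ℝ | |Real.cos φ * x.1 + Real.sin φ * x.2 - s| < w ∧ x ∈ unitDisk} := by
      ext x; rw [Set.mem_setOf_eq, Set.mem_setOf_eq, hd x]
    rw [he]
    exact aux_strip_core hw hcase
  · have hc : (1 : ℝ)/4 ≤ Real.cos φ ^ 2 := by nlinarith
    have hswap : MeasureTheory.MeasurePreserving (Prod.swap : ℝ × ℝ → ℝ × ℝ)
        (volume : Measure (ℝ × ℝ)) (volume : Measure (ℝ × ℝ)) := by
      rw [MeasureTheory.Measure.volume_eq_prod]
      exact MeasureTheory.Measure.measurePreserving_swap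
    set A := {x : ℝ × ℝ | |Real.sin φ * x.1 + Real.cos φ * x.2 - s| < w ∧ x ∈ unitDisk}
      with hA
    have hAm : MeasurableSet A := aux_stripset_meas _ _ _ _
    have hAv : volume A ≤ ENNReal.ofReal (8 * w) := aux_strip_core hw hc
    have he : {x : ℝ × ℝ | |dot2 x (dirv φ) - s| < w ∧ x ∈ unitDisk} = Prod.swap ⁻¹' A := by
      ext x
      simp only [hA, Set.mem_setOf_eq, Set.mem_preimage, Prod.fst_swap, Prod.snd_swap]
      rw [hd x]
      constructor
      · rintro ⟨h1, h2⟩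
        refine ⟨by rw [show Real.sin φ * x.2 + Real.cos φ * x.1
          = Real.cos φ * x.1 + Real.sin φ * x.2 by ring]; exact h1, ?_⟩
        have h2' : x.1 ^ 2 + x.2 ^ 2 < 1 := h2
        show x.2 ^ 2 + x.1 ^ 2 < 1
        linarith
      · rintro ⟨h1, h2⟩
        refine ⟨by rw [show Real.cos φ * x.1 + Real.sin φ * x.2
          = Real.sin φ * x.2 + Real.cos φ * x.1 by ring]; exact h1, ?_⟩
        have h2' : x.2 ^ 2 + x.1 ^ 2 < 1 := h2
        show x.1 ^ 2 + x.2 ^ 2 < 1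
        linarith
    rw [he, hswap.measure_preimage hAm.nullMeasurableSet]
    exact hAv

lemma aux_count {δs δx : ℝ} (hδs : 0 < δs) (hδx : 0 < δx) (P : ℕ) (r : ℝ) :
    (((Finset.Icc 1 P).filter fun p => |r - sCen δs P p| < δs + δx).card : ℝ)
      ≤ 3 + 2 * (δx / δs) := by
  classical
  set S := (Finset.Icc 1 P).filter fun p => |r - sCen δs P p| < δs + δx with hS
  have ht : 0 ≤ δx / δs := by positivity
  rcases S.eq_empty_or_nonempty with h | h
  · rw [h]; simp; linarith
  · set a := S.min' h with ha
    set b := S.max' h with hb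
    have hsub : S ⊆ Finset.Icc a b := fun p hp =>
      Finset.mem_Icc.mpr ⟨S.min'_le p hp, S.le_max' p hp⟩
    have hcard : S.card ≤ b + 1 - a := by
      calc S.card ≤ (Finset.Icc a b).card := Finset.card_le_card hsub
        _ = b + 1 - a := Nat.card_Icc a b
    have hmemS : ∀ x ∈ S, |r - sCen δs P x| < δs + δx := by
      intro x hx
      rw [hS, Finset.mem_filter] at hx
      exact hx.2
    have h1 := hmemS b (S.max'_mem h)
    have h2 := hmemS a (S.min'_mem h)
    rw [abs_lt] at h1 h2
    have h3 : |sCen δs P b - sCen δs P a| < 2 * (δs + δx) := by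
      rw [show sCen δs P b - sCen δs P a = (r - sCen δs P a) - (r - sCen δs P b) by ring,
        abs_lt]
      constructor <;> linarith [h1.1, h1.2, h2.1, h2.2]
    have h4 : sCen δs P b - sCen δs P a = δs * ((b : ℝ) - a) := by
      unfold sCen; push_cast; ring
    rw [h4, abs_mul, abs_of_pos hδs] at h3
    have h5 : (b : ℝ) - a < 2 * (δs + δx) / δs := by
      have h6 : (b : ℝ) - a ≤ |(b : ℝ) - a| := le_abs_self _
      rw [lt_div_iff₀ hδs]
      nlinarith
    have hab : a ≤ b + 1 := by
      have := S.min'_le _ (S.max'_mem h); omega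
    have h7 : (S.card : ℝ) ≤ (b : ℝ) + 1 - a := by
      have h8 : ((b + 1 - a : ℕ) : ℝ) = (b : ℝ) + 1 - a := by
        rw [Nat.cast_sub hab]; push_cast; ring
      calc (S.card : ℝ) ≤ ((b + 1 - a : ℕ) : ℝ) := by exact_mod_cast hcard
        _ = (b : ℝ) + 1 - a := h8
    have h9 : 2 * (δs + δx) / δs = 2 + 2 * (δx / δs) := by field_simp
    rw [h9] at h5
    linarith

lemma aux_pixCell_meas (δx : ℝ) (N M i j : ℕ) : MeasurableSet (pixCell δx N M i j) :=
  measurableSet_Ico.prod measurableSet_Ico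

lemma aux_pix_disj {δx : ℝ} (hδx : 0 < δx) (N M : ℕ) :
    Set.Pairwise ↑(Finset.Icc 1 N ×ˢ Finset.Icc 1 M)
      (Function.onFun Disjoint fun ij : ℕ × ℕ => pixCell δx N M ij.1 ij.2) := by
  rintro ⟨i, j⟩ _ ⟨i', j'⟩ _ hne
  rw [Function.onFun, Set.disjoint_left]
  rintro x hx hx'
  simp only [pixCell, Set.mem_prod] at hx hx'
  have hij : i ≠ i' ∨ j ≠ j' := by
    by_contra hc; push_neg at hc; exact hne (Prod.ext hc.1 hc.2)
  rcases hij with hii | hjj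
  · exact aux_ico_disj (aux_grid_dist hδx (((N : ℝ) + 1)/2) hii) hx.1 hx'.1
  · exact aux_ico_disj (aux_grid_dist hδx (((M : ℝ) + 1)/2) hjj) hx.2 hx'.2

lemma aux_pix_dot {δx : ℝ} (hδx : 0 < δx) {N M i j : ℕ} {x : ℝ × ℝ}
    (hx : x ∈ pixCell δx N M i j) (φ : ℝ) :
    |dot2 x (dirv φ) - dot2 (pixCen δx N M i j) (dirv φ)| ≤ δx := by
  simp only [pixCell, Set.mem_prod, Set.mem_Ico] at hx
  have h1 : |x.1 - (pixCen δx N M i j).1| ≤ δx/2 := by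
    rw [abs_le]; constructor <;> linarith [hx.1.1, hx.1.2]
  have h2 : |x.2 - (pixCen δx N M i j).2| ≤ δx/2 := by
    rw [abs_le]; constructor <;> linarith [hx.2.1, hx.2.2]
  have he : dot2 x (dirv φ) - dot2 (pixCen δx N M i j) (dirv φ)
      = (x.1 - (pixCen δx N M i j).1) * Real.cos φ
        + (x.2 - (pixCen δx N M i j).2) * Real.sin φ := by
    simp only [dot2, dirv]; ring
  rw [he]
  calc |(x.1 - (pixCen δx N M i j).1) * Real.cos φ
        + (x.2 - (pixCen δx N M i j).2) * Real.sin φ|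
      ≤ |(x.1 - (pixCen δx N M i j).1) * Real.cos φ|
        + |(x.2 - (pixCen δx N M i j).2) * Real.sin φ| := abs_add_le _ _
    _ ≤ δx/2 * 1 + δx/2 * 1 := by
        rw [abs_mul, abs_mul]
        exact add_le_add
          (mul_le_mul h1 (Real.abs_cos_le_one φ) (abs_nonneg _) (by linarith))
          (mul_le_mul h2 (Real.abs_sin_le_one φ) (abs_nonneg _) (by linarith))
    _ = δx := by ring

lemma aux_pix_biUnion {δx : ℝ} (hδx : 0 < δx) (N M : ℕ) {g : ℝ × ℝ → ℝ}
    (hg : MeasureTheory.Integrable g (volume : Measure (ℝ × ℝ))) :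
    ∑ i ∈ Finset.Icc 1 N, ∑ j ∈ Finset.Icc 1 M, ∫ x in pixCell δx N M i j, g x
      = ∫ x in ⋃ ij ∈ Finset.Icc 1 N ×ˢ Finset.Icc 1 M, pixCell δx N M ij.1 ij.2, g x := by
  rw [MeasureTheory.integral_biUnion_finset _ (fun ij _ => aux_pixCell_meas δx N M ij.1 ij.2)
    (aux_pix_disj hδx N M) (fun ij _ => hg.integrableOn)]
  rw [Finset.sum_product]

lemma aux_pix_union_eq (δx : ℝ) (N M : ℕ) :
    (⋃ ij ∈ Finset.Icc 1 N ×ˢ Finset.Icc 1 M, pixCell δx N M ij.1 ij.2)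
      = ⋃ i ∈ Finset.Icc 1 N, ⋃ j ∈ Finset.Icc 1 M, pixCell δx N M i j := by
  ext x
  simp only [Set.mem_iUnion, Finset.mem_product, Prod.exists]
  constructor
  · rintro ⟨i, j, ⟨hi, hj⟩, hx⟩; exact ⟨i, hi, j, hj, hx⟩
  · rintro ⟨i, hi, j, hj, hx⟩; exact ⟨i, j, ⟨hi, hj⟩, hx⟩

lemma aux_pix_total {δx : ℝ} (hδx : 0 < δx) {N M : ℕ} (hcov : CoversDisk δx N M)
    {g : ℝ × ℝ → ℝ} (hg : MeasureTheory.Integrable g (volume : Measure (ℝ × ℝ)))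
    (hg0 : ∀ x, x ∉ unitDisk → g x = 0) :
    ∑ i ∈ Finset.Icc 1 N, ∑ j ∈ Finset.Icc 1 M, ∫ x in pixCell δx N M i j, g x
      = ∫ x, g x := by
  rw [aux_pix_biUnion hδx N M hg]
  apply MeasureTheory.setIntegral_eq_integral_of_forall_compl_eq_zero
  intro x hx
  refine hg0 x fun hmem => hx ?_
  rw [aux_pix_union_eq]
  exact hcov hmem

lemma aux_pix_le {δx : ℝ} (hδx : 0 < δx) (N M : ℕ) {g : ℝ × ℝ → ℝ}
    (hg : MeasureTheory.Integrable g (volume : Measure (ℝ × ℝ))) (hg0 : ∀ x, 0 ≤ g x) :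
    ∑ i ∈ Finset.Icc 1 N, ∑ j ∈ Finset.Icc 1 M, ∫ x in pixCell δx N M i j, g x
      ≤ ∫ x, g x := by
  rw [aux_pix_biUnion hδx N M hg]
  exact MeasureTheory.setIntegral_le_integral hg (MeasureTheory.ae_of_all _ hg0)

lemma aux_cs {ι : Type*} (t : Finset ι) (c T : ι → ℝ) (hc : ∀ i ∈ t, c i = 0 ∨ c i = 1)
    (hsum : ∑ i ∈ t, c i ≤ 1) :
    (∑ i ∈ t, c i * T i) ^ 2 ≤ ∑ i ∈ t, c i * T i ^ 2 := by
  have hcc : ∀ i ∈ t, c i * c i = c i := fun i hi => by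
    rcases hc i hi with h | h <;> rw [h] <;> ring
  have h1 : (∑ i ∈ t, c i * T i) = ∑ i ∈ t, c i * (c i * T i) := by
    refine Finset.sum_congr rfl fun i hi => ?_
    rw [← mul_assoc, hcc i hi]
  rw [h1]
  calc (∑ i ∈ t, c i * (c i * T i)) ^ 2
      ≤ (∑ i ∈ t, c i ^ 2) * ∑ i ∈ t, (c i * T i) ^ 2 :=
        Finset.sum_mul_sq_le_sq_mul_sq t c fun i => c i * T i
    _ = (∑ i ∈ t, c i) * ∑ i ∈ t, c i * T i ^ 2 := by
        congr 1
        · exact Finset.sum_congr rfl fun i hi => by rw [sq, hcc i hi]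
        · exact Finset.sum_congr rfl fun i hi => by rw [mul_pow, sq, hcc i hi]
    _ ≤ 1 * ∑ i ∈ t, c i * T i ^ 2 := by
        refine mul_le_mul_of_nonneg_right hsum (Finset.sum_nonneg fun i hi => ?_)
        exact mul_nonneg (by rcases hc i hi with h | h <;> simp [h]) (sq_nonneg _)
    _ = ∑ i ∈ t, c i * T i ^ 2 := one_mul _

lemma aux_intOn_ind {S : Set ℝ} (hS : MeasurableSet S) {a b : ℝ} :
    MeasureTheory.IntegrableOn (S.indicator fun _ => (1 : ℝ)) (Ioo a b) volume := by
  have hfin : volume (Ioo a b) < ⊤ := by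
    rw [Real.volume_Ioo]; exact ENNReal.ofReal_lt_top
  refine MeasureTheory.Integrable.mono' (g := fun _ => (1 : ℝ))
    (MeasureTheory.integrableOn_const hfin.ne)
    ((measurable_const.indicator hS).aestronglyMeasurable)
    (MeasureTheory.ae_of_all _ fun x => ?_)
  rw [Real.norm_eq_abs]
  by_cases h : x ∈ S <;> simp [Set.indicator_apply, h]

lemma aux_rpow_half_sq {a : ℝ} (ha : 0 ≤ a) : (a ^ ((1 : ℝ)/2)) ^ 2 = a := by
  rw [show (1 : ℝ)/2 = 1/(2 : ℝ) by norm_num, ← Real.sqrt_eq_rpow]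
  exact Real.sq_sqrt ha

lemma aux_rpow_two (y : ℝ) (hy : 0 ≤ y) : y ^ (2 : ℝ) = y ^ 2 := by
  rw [show (2 : ℝ) = ((2 : ℕ) : ℝ) by norm_num, Real.rpow_natCast]

end Aux

set_option maxHeartbeats 1600000 in
/-- `‖R^{δ_x}_{δ_s,δ_φ} − R_{δ_s,δ_φ}‖ ≤ C √(1 + δ_x/δ_s) (δ_x/δ_s)`
in the operator norm `L²(Ω) → L²(Ω')`. -/
theorem radon_image_discretization :
    ∃ C : ℝ, 0 < C ∧ ∀ (δs δx : ℝ) (P Q N M : ℕ) (φs : ℕ → ℝ),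
      0 < δs → 0 < δx → CoversI δs P → AngGrid Q φs → CoversDisk δx N M →
      ∀ f : ℝ × ℝ → ℝ, SuppDisk f → L2Img f →
        nSinoD (fun s φ =>
          RadonFull δs P Q φs δx N M f s φ - RadonSA δs P Q φs f s φ) ≤
          C * Real.sqrt (1 + δx / δs) * (δx / δs) * nImg f := by
  refine ⟨Real.sqrt (80 * π), Real.sqrt_pos.mpr (by positivity), ?_⟩
  intro δs δx P Q N M φs hδs hδx hcovI hang hcovD f hsupp hf
  have hπ := Real.pi_pos
  set t := δx / δs with ht_def
  have ht0 : 0 ≤ t := by positivity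
  set F := ∫ x : ℝ × ℝ, f x ^ 2 with hF_def
  have hF0 : 0 ≤ F := MeasureTheory.integral_nonneg fun x => sq_nonneg _
  have hf2 : MeasureTheory.Integrable (fun x : ℝ × ℝ => f x ^ 2) volume := by
    have := hf.integrable_sq
    rw [← hF_def] at *
    exact hf.integrable_sq
  have hfm : MeasureTheory.AEStronglyMeasurable f volume := hf.aestronglyMeasurable
  have hfi : MeasureTheory.Integrable f volume := by
    refine MeasureTheory.Integrable.mono'
      (g := fun x => (unitDisk.indicator (fun _ => (1 : ℝ)) x + f x ^ 2) / 2) ?_ hfm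
      (MeasureTheory.ae_of_all _ fun x => ?_)
    · exact (((MeasureTheory.integrable_indicator_iff aux_unitDisk_meas).mpr
        (MeasureTheory.integrableOn_const aux_unitDisk_vol.ne)).add hf2).div_const 2
    · rw [Real.norm_eq_abs]
      by_cases hx : x ∈ unitDisk
      · rw [Set.indicator_of_mem hx]
        nlinarith [sq_nonneg (|f x| - 1), sq_abs (f x)]
      · rw [Set.indicator_of_notMem hx, hsupp x hx]
        norm_num
  set m := min δx δs with hm_def
  have hm0 : 0 ≤ m := le_min hδx.le hδs.le
  set w' := δs + δx with hw'_def
  have hw'0 : 0 < w' := by rw [hw'_def]; linarith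
  -- strips
  set E : ℕ → ℕ → Set (ℝ × ℝ) :=
    fun q p => {x : ℝ × ℝ | |dot2 x (dirv (φs q)) - sCen δs P p| < w'} with hE_def
  set R : ℕ → ℕ → Set (ℝ × ℝ) := fun q p => E q p ∩ unitDisk with hR_def
  have hdotmeas : ∀ q, Measurable fun x : ℝ × ℝ => dot2 x (dirv (φs q)) := by
    intro q; simp only [dot2]; fun_prop
  have hEmeas : ∀ q p, MeasurableSet (E q p) := by
    intro q p
    have he : E q p = (fun x : ℝ × ℝ => dot2 x (dirv (φs q)) - sCen δs P p) ⁻¹'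
        (Ioo (-w') w') := by
      ext x
      simp only [hE_def, Set.mem_setOf_eq, Set.mem_preimage, Set.mem_Ioo, abs_lt]
    rw [he]
    exact measurableSet_Ioo.preimage ((hdotmeas q).sub measurable_const)
  have hRmeas : ∀ q p, MeasurableSet (R q p) := fun q p =>
    (hEmeas q p).inter aux_unitDisk_meas
  have hRfin : ∀ q p, volume (R q p) < ⊤ := fun q p =>
    lt_of_le_of_lt (measure_mono inter_subset_right) aux_unitDisk_vol
  have hRvol : ∀ q p, (volume (R q p)).toReal ≤ 8 * w' := by
    intro q p
    refine ENNReal.toReal_le_of_le_ofReal (by linarith) ?_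
    have he : R q p
        = {x : ℝ × ℝ | |dot2 x (dirv (φs q)) - sCen δs P p| < w' ∧ x ∈ unitDisk} := by
      ext x; simp only [hR_def, hE_def, Set.mem_inter_iff, Set.mem_setOf_eq]
    rw [he]
    exact aux_strip_vol (φs q) (sCen δs P p) w' hw'0.le
  -- the per-cell error terms
  set T : ℕ → ℕ → ℝ := fun q p =>
    (∑ i ∈ Finset.Icc 1 N, ∑ j ∈ Finset.Icc 1 M,
        hatw δs (dot2 (pixCen δx N M i j) (dirv (φs q)) - sCen δs P p)
          * ∫ x in pixCell δx N M i j, f x)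
      - ∫ x in unitDisk, hatw δs (dot2 x (dirv (φs q)) - sCen δs P p) * f x with hT_def
  have hTabs : ∀ q p, |T q p| ≤ m * ∫ x in R q p, |f x| := by
    intro q p
    have hwcont : Continuous fun x : ℝ × ℝ =>
        hatw δs (dot2 x (dirv (φs q)) - sCen δs P p) := by
      have he : (fun x : ℝ × ℝ => hatw δs (dot2 x (dirv (φs q)) - sCen δs P p))
          = fun x : ℝ × ℝ => max 0 (δs - |dot2 x (dirv (φs q)) - sCen δs P p|) := rfl
      rw [he]
      refine Continuous.max continuous_const (Continuous.sub continuous_const ?_)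
      refine Continuous.abs (Continuous.sub ?_ continuous_const)
      simp only [dot2, dirv]
      fun_prop
    have hwfi : MeasureTheory.Integrable
        (fun x => hatw δs (dot2 x (dirv (φs q)) - sCen δs P p) * f x) volume := by
      refine MeasureTheory.Integrable.mono' (hfi.abs.const_mul δs)
        (hwcont.aestronglyMeasurable.mul hfm) (MeasureTheory.ae_of_all _ fun x => ?_)
      simp only [Real.norm_eq_abs]
      rw [abs_mul]
      exact mul_le_mul_of_nonneg_right
        (by rw [abs_of_nonneg (aux_hatw_nonneg _ _)]; exact aux_hatw_le hδs.le _)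
        (abs_nonneg _)
    have hsplit : ∫ x in unitDisk, hatw δs (dot2 x (dirv (φs q)) - sCen δs P p) * f x
        = ∑ i ∈ Finset.Icc 1 N, ∑ j ∈ Finset.Icc 1 M,
            ∫ x in pixCell δx N M i j,
              hatw δs (dot2 x (dirv (φs q)) - sCen δs P p) * f x := by
      rw [MeasureTheory.setIntegral_eq_integral_of_forall_compl_eq_zero
        (fun x hx => by rw [hsupp x hx, mul_zero])]
      exact (aux_pix_total hδx hcovD hwfi (fun x hx => by rw [hsupp x hx, mul_zero])).symm
    have hTform : T q p = ∑ i ∈ Finset.Icc 1 N, ∑ j ∈ Finset.Icc 1 M,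
        ∫ x in pixCell δx N M i j,
          (hatw δs (dot2 (pixCen δx N M i j) (dirv (φs q)) - sCen δs P p)
            - hatw δs (dot2 x (dirv (φs q)) - sCen δs P p)) * f x := by
      simp only [hT_def]
      rw [hsplit, ← Finset.sum_sub_distrib]
      refine Finset.sum_congr rfl fun i _ => ?_
      rw [← Finset.sum_sub_distrib]
      refine Finset.sum_congr rfl fun j _ => ?_
      rw [show hatw δs (dot2 (pixCen δx N M i j) (dirv (φs q)) - sCen δs P p)
            * ∫ x in pixCell δx N M i j, f x
          = ∫ x in pixCell δx N M i j,
              hatw δs (dot2 (pixCen δx N M i j) (dirv (φs q)) - sCen δs P p) * f x from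
        (MeasureTheory.integral_const_mul _ _).symm]
      rw [← MeasureTheory.integral_sub (hfi.integrableOn.const_mul _) hwfi.integrableOn]
      exact MeasureTheory.setIntegral_congr_fun (aux_pixCell_meas δx N M i j)
        fun x _ => by ring
    have hpix : ∀ i ∈ Finset.Icc 1 N, ∀ j ∈ Finset.Icc 1 M,
        |∫ x in pixCell δx N M i j,
            (hatw δs (dot2 (pixCen δx N M i j) (dirv (φs q)) - sCen δs P p)
              - hatw δs (dot2 x (dirv (φs q)) - sCen δs P p)) * f x|
          ≤ ∫ x in pixCell δx N M i j,
              m * (R q p).indicator (fun y => |f y|) x := by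
      intro i _ j _
      have hint1 : MeasureTheory.IntegrableOn
          (fun x => (hatw δs (dot2 (pixCen δx N M i j) (dirv (φs q)) - sCen δs P p)
            - hatw δs (dot2 x (dirv (φs q)) - sCen δs P p)) * f x)
          (pixCell δx N M i j) volume := by
        have he : (fun x => (hatw δs (dot2 (pixCen δx N M i j) (dirv (φs q)) - sCen δs P p)
              - hatw δs (dot2 x (dirv (φs q)) - sCen δs P p)) * f x)
            = fun x => hatw δs (dot2 (pixCen δx N M i j) (dirv (φs q)) - sCen δs P p) * f x
              - hatw δs (dot2 x (dirv (φs q)) - sCen δs P p) * f x := funext fun x => by ring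
        rw [he]
        exact (hfi.integrableOn.const_mul _).sub hwfi.integrableOn
      have hint2 : MeasureTheory.IntegrableOn
          (fun x => m * (R q p).indicator (fun y => |f y|) x)
          (pixCell δx N M i j) volume :=
        ((hfi.abs.indicator (hRmeas q p)).const_mul m).integrableOn
      refine le_trans ?_ (MeasureTheory.setIntegral_mono_on hint1.abs hint2
        (aux_pixCell_meas δx N M i j) fun x hxpix => ?_)
      · rw [← Real.norm_eq_abs]
        
        refine le_of_le_of_eq (MeasureTheory.norm_integral_le_integral_norm _) ?_
        simp only [Real.norm_eq_abs]
      · rw [abs_mul]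
        by_cases hxΩ : x ∈ unitDisk
        · by_cases hxE : x ∈ E q p
          · have hxR : x ∈ R q p := ⟨hxE, hxΩ⟩
            rw [Set.indicator_of_mem hxR]
            refine mul_le_mul_of_nonneg_right ?_ (abs_nonneg _)
            have hd : |(dot2 (pixCen δx N M i j) (dirv (φs q)) - sCen δs P p)
                - (dot2 x (dirv (φs q)) - sCen δs P p)| ≤ δx := by
              rw [show (dot2 (pixCen δx N M i j) (dirv (φs q)) - sCen δs P p)
                  - (dot2 x (dirv (φs q)) - sCen δs P p)
                  = -(dot2 x (dirv (φs q)) - dot2 (pixCen δx N M i j) (dirv (φs q))) by ring,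
                abs_neg]
              exact aux_pix_dot hδx hxpix (φs q)
            exact le_trans (aux_hatw_diff hδs.le _ _)
              (le_trans (min_le_min hd le_rfl) (le_of_eq hm_def.symm))
          · have h1 : w' ≤ |dot2 x (dirv (φs q)) - sCen δs P p| := by
              have := hxE
              simp only [hE_def, Set.mem_setOf_eq, not_lt] at this
              exact this
            have h2 := aux_pix_dot hδx hxpix (φs q)
            have h3 : |dot2 x (dirv (φs q)) - sCen δs P p|
                - |dot2 (pixCen δx N M i j) (dirv (φs q)) - sCen δs P p|
                ≤ |dot2 x (dirv (φs q)) - dot2 (pixCen δx N M i j) (dirv (φs q))| := by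
              have h4 := abs_sub_abs_le_abs_sub (dot2 x (dirv (φs q)) - sCen δs P p)
                (dot2 (pixCen δx N M i j) (dirv (φs q)) - sCen δs P p)
              rw [show (dot2 x (dirv (φs q)) - sCen δs P p)
            - (dot2 (pixCen δx N M i j) (dirv (φs q)) - sCen δs P p)
                  = dot2 x (dirv (φs q)) - dot2 (pixCen δx N M i j) (dirv (φs q)) by ring]
                at h4
              exact h4
            rw [hw'_def] at h1
            have hza : hatw δs (dot2 x (dirv (φs q)) - sCen δs P p) = 0 :=
              aux_hatw_zero (by linarith)
            have hzb : hatw δs (dot2 (pixCen δx N M i j) (dirv (φs q)) - sCen δs P p) = 0 :=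
              aux_hatw_zero (by linarith)
            rw [hza, hzb, sub_zero, abs_zero, zero_mul]
            exact mul_nonneg hm0 (Set.indicator_nonneg (fun y _ => abs_nonneg _) x)
        · rw [hsupp x hxΩ, abs_zero, mul_zero]
          exact mul_nonneg hm0 (Set.indicator_nonneg (fun y _ => abs_nonneg _) x)
    rw [hTform]
    calc |∑ i ∈ Finset.Icc 1 N, ∑ j ∈ Finset.Icc 1 M,
          ∫ x in pixCell δx N M i j,
            (hatw δs (dot2 (pixCen δx N M i j) (dirv (φs q)) - sCen δs P p)
              - hatw δs (dot2 x (dirv (φs q)) - sCen δs P p)) * f x|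
        ≤ ∑ i ∈ Finset.Icc 1 N, ∑ j ∈ Finset.Icc 1 M,
            |∫ x in pixCell δx N M i j,
              (hatw δs (dot2 (pixCen δx N M i j) (dirv (φs q)) - sCen δs P p)
                - hatw δs (dot2 x (dirv (φs q)) - sCen δs P p)) * f x| :=
          le_trans (Finset.abs_sum_le_sum_abs _ _)
            (Finset.sum_le_sum fun i _ => Finset.abs_sum_le_sum_abs _ _)
      _ ≤ ∑ i ∈ Finset.Icc 1 N, ∑ j ∈ Finset.Icc 1 M,
            ∫ x in pixCell δx N M i j, m * (R q p).indicator (fun y => |f y|) x :=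
          Finset.sum_le_sum fun i hi => Finset.sum_le_sum fun j hj => hpix i hi j hj
      _ ≤ ∫ x, m * (R q p).indicator (fun y => |f y|) x :=
          aux_pix_le hδx N M ((hfi.abs.indicator (hRmeas q p)).const_mul m)
            (fun x => mul_nonneg hm0 (Set.indicator_nonneg (fun y _ => abs_nonneg _) x))
      _ = m * ∫ x, (R q p).indicator (fun y => |f y|) x :=
          MeasureTheory.integral_const_mul _ _
      _ = m * ∫ x in R q p, |f x| := by
          rw [MeasureTheory.integral_indicator (hRmeas q p)]
  have hTsq : ∀ q p, T q p ^ 2 ≤ m ^ 2 * (8 * w') * ∫ x in R q p, f x ^ 2 := by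
    intro q p
    have hRint0 : 0 ≤ ∫ x in R q p, f x ^ 2 :=
      MeasureTheory.setIntegral_nonneg (hRmeas q p) fun x _ => sq_nonneg _
    haveI hfinR : MeasureTheory.IsFiniteMeasure (volume.restrict (R q p)) := by
      constructor
      rw [MeasureTheory.Measure.restrict_apply_univ]
      exact hRfin q p
    have hconj : Real.HolderConjugate 2 2 := Real.HolderConjugate.two_two
    have hofr : ENNReal.ofReal (2 : ℝ) = 2 := by
      rw [ENNReal.ofReal_ofNat]
    have hmemf : MeasureTheory.MemLp (fun x => |f x|) (ENNReal.ofReal 2)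
        (volume.restrict (R q p)) := by
      rw [hofr]
      have hmf := (hf.restrict (R q p)).norm
      simpa [Real.norm_eq_abs] using hmf
    have hmem1 : MeasureTheory.MemLp (fun _ : ℝ × ℝ => (1 : ℝ)) (ENNReal.ofReal 2)
        (volume.restrict (R q p)) := by
      rw [hofr]
      exact MeasureTheory.memLp_const 1
    have hCS := MeasureTheory.integral_mul_le_Lp_mul_Lq_of_nonneg hconj
      (MeasureTheory.ae_of_all _ fun x => abs_nonneg (f x))
      (MeasureTheory.ae_of_all _ fun _ => zero_le_one) hmemf hmem1
    have e2 : ∫ x in R q p, |f x| ^ (2 : ℝ) = ∫ x in R q p, f x ^ 2 :=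
      MeasureTheory.integral_congr_ae (MeasureTheory.ae_of_all _ fun x => by
        show |f x| ^ (2 : ℝ) = f x ^ 2
        rw [aux_rpow_two _ (abs_nonneg _), sq_abs])
    have e3 : ∫ _x in R q p, (1 : ℝ) ^ (2 : ℝ) = (volume (R q p)).toReal := by
      simp [Real.one_rpow, measureReal_def]
    have h1 : ∫ x in R q p, |f x|
        ≤ (∫ x in R q p, f x ^ 2) ^ ((1 : ℝ)/2) * ((volume (R q p)).toReal) ^ ((1 : ℝ)/2) := by
      have e1 : ∫ x in R q p, |f x| = ∫ x in R q p, |f x| * 1 := by simp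
      rw [e1]
      calc ∫ x in R q p, |f x| * 1
          ≤ (∫ x in R q p, |f x| ^ (2 : ℝ)) ^ ((1 : ℝ)/2)
            * (∫ _x in R q p, (1 : ℝ) ^ (2 : ℝ)) ^ ((1 : ℝ)/2) := by
            have := hCS
            norm_num at this ⊢
            exact this
        _ = (∫ x in R q p, f x ^ 2) ^ ((1 : ℝ)/2) * ((volume (R q p)).toReal) ^ ((1 : ℝ)/2) := by
            rw [e2, e3]
    have habs : 0 ≤ ∫ x in R q p, |f x| :=
      MeasureTheory.setIntegral_nonneg (hRmeas q p) fun x _ => abs_nonneg _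
    calc T q p ^ 2 = |T q p| ^ 2 := (sq_abs _).symm
      _ ≤ (m * ∫ x in R q p, |f x|) ^ 2 := by
          refine pow_le_pow_left₀ (abs_nonneg _) (hTabs q p) 2
      _ = m ^ 2 * (∫ x in R q p, |f x|) ^ 2 := by ring
      _ ≤ m ^ 2 * ((∫ x in R q p, f x ^ 2) ^ ((1 : ℝ)/2)
            * ((volume (R q p)).toReal) ^ ((1 : ℝ)/2)) ^ 2 :=
          mul_le_mul_of_nonneg_left (pow_le_pow_left₀ habs h1 2) (sq_nonneg m)
      _ = m ^ 2 * ((∫ x in R q p, f x ^ 2) * (volume (R q p)).toReal) := by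
          rw [mul_pow, aux_rpow_half_sq hRint0, aux_rpow_half_sq ENNReal.toReal_nonneg]
      _ ≤ m ^ 2 * (8 * w') * ∫ x in R q p, f x ^ 2 := by
          have hv := hRvol q p
          nlinarith [mul_nonneg (sq_nonneg m) hRint0,
            mul_nonneg (mul_nonneg (sq_nonneg m) hRint0) (sub_nonneg.mpr hv)]
  -- counting / overlap bound
  have hcountR : ∀ q (x : ℝ × ℝ),
      ∑ p ∈ Finset.Icc 1 P, (R q p).indicator (fun y => f y ^ 2) x
        ≤ (3 + 2 * t) * f x ^ 2 := by
    intro q x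
    classical
    have e1 : ∑ p ∈ Finset.Icc 1 P, (R q p).indicator (fun y => f y ^ 2) x
        = (((Finset.Icc 1 P).filter fun p => x ∈ R q p).card : ℝ) * f x ^ 2 := by
      rw [Finset.sum_congr rfl fun p _ => Set.indicator_apply (R q p) (fun y => f y ^ 2) x,
        ← Finset.sum_filter, Finset.sum_const, nsmul_eq_mul]
    rw [e1]
    have hsubfil : ((Finset.Icc 1 P).filter fun p => x ∈ R q p)
        ⊆ ((Finset.Icc 1 P).filter fun p =>
            |dot2 x (dirv (φs q)) - sCen δs P p| < δs + δx) := by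
      intro p hp
      rw [Finset.mem_filter] at hp ⊢
      refine ⟨hp.1, ?_⟩
      have hmem := hp.2
      rw [hR_def] at hmem
      have hmem2 := hmem.1
      rw [hE_def] at hmem2
      rw [← hw'_def]
      exact hmem2
    have hcount := aux_count hδs hδx P (dot2 x (dirv (φs q)))
    rw [← ht_def] at hcount
    have hcard : (((Finset.Icc 1 P).filter fun p => x ∈ R q p).card : ℝ) ≤ 3 + 2 * t := by
      refine le_trans ?_ hcount
      exact_mod_cast Nat.cast_le.mpr (Finset.card_le_card hsubfil)
    exact mul_le_mul_of_nonneg_right hcard (sq_nonneg _)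
  set K := m ^ 2 * (8 * w') * ((3 + 2 * t) * F) with hK_def
  have hK0 : 0 ≤ K := by
    rw [hK_def]
    have h1 : (0 : ℝ) ≤ 3 + 2 * t := by linarith
    exact mul_nonneg (mul_nonneg (sq_nonneg m) (by linarith)) (mul_nonneg h1 hF0)
  have hKsum : ∀ q, ∑ p ∈ Finset.Icc 1 P, T q p ^ 2 ≤ K := by
    intro q
    have hsum1 : ∑ p ∈ Finset.Icc 1 P, ∫ x in R q p, f x ^ 2 ≤ (3 + 2 * t) * F := by
      have e1 : ∀ p ∈ Finset.Icc 1 P, ∫ x in R q p, f x ^ 2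
          = ∫ x, (R q p).indicator (fun y => f y ^ 2) x :=
        fun p _ => (MeasureTheory.integral_indicator (hRmeas q p)).symm
      rw [Finset.sum_congr rfl e1,
        ← MeasureTheory.integral_finset_sum _ (fun p _ => hf2.indicator (hRmeas q p))]
      calc ∫ x, ∑ p ∈ Finset.Icc 1 P, (R q p).indicator (fun y => f y ^ 2) x
          ≤ ∫ x : ℝ × ℝ, (3 + 2 * t) * f x ^ 2 :=
            MeasureTheory.integral_mono_of_nonneg
              (MeasureTheory.ae_of_all _ fun x => Finset.sum_nonneg fun p _ =>
                Set.indicator_nonneg (fun y _ => sq_nonneg _) x)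
              (hf2.const_mul _)
              (MeasureTheory.ae_of_all _ fun x => hcountR q x)
        _ = (3 + 2 * t) * F := by rw [MeasureTheory.integral_const_mul, hF_def]
    calc ∑ p ∈ Finset.Icc 1 P, T q p ^ 2
        ≤ ∑ p ∈ Finset.Icc 1 P, m ^ 2 * (8 * w') * ∫ x in R q p, f x ^ 2 :=
          Finset.sum_le_sum fun p _ => hTsq q p
      _ = m ^ 2 * (8 * w') * ∑ p ∈ Finset.Icc 1 P, ∫ x in R q p, f x ^ 2 := by
          rw [Finset.mul_sum]
      _ ≤ K := by
          rw [hK_def]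
          exact mul_le_mul_of_nonneg_left hsum1
            (mul_nonneg (sq_nonneg m) (by linarith))
  -- the sinogram error function
  set χs : ℕ → ℝ → ℝ := fun p s => (sCell δs P p).indicator (fun _ => (1 : ℝ)) s with hχs
  set χa : ℕ → ℝ → ℝ := fun q φ => (angCell φs q).indicator (fun _ => (1 : ℝ)) φ with hχa
  have hχs0 : ∀ p s, 0 ≤ χs p s := fun p s => by
    simp only [hχs]; exact aux_ind_nonneg _ _
  have hχa0 : ∀ q φ, 0 ≤ χa q φ := fun q φ => by
    simp only [hχa]; exact aux_ind_nonneg _ _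
  have hgrep : ∀ s φ, RadonFull δs P Q φs δx N M f s φ - RadonSA δs P Q φs f s φ
      = (δs ^ 2)⁻¹ * ∑ q ∈ Finset.Icc 1 Q, ∑ p ∈ Finset.Icc 1 P,
          (χs p s * χa q φ) * T q p := by
    intro s φ
    simp only [RadonFull, RadonSA]
    rw [← mul_sub, ← Finset.sum_sub_distrib]
    congr 1
    refine Finset.sum_congr rfl fun q _ => ?_
    rw [← Finset.sum_sub_distrib]
    refine Finset.sum_congr rfl fun p _ => ?_
    simp only [hχs, hχa, hT_def]
    ring
  set g : ℝ → ℝ → ℝ :=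
    fun s φ => RadonFull δs P Q φs δx N M f s φ - RadonSA δs P Q φs f s φ with hg_def
  have hptws : ∀ φ s, g s φ ^ 2 ≤ ((δs ^ 2)⁻¹) ^ 2 *
      ∑ q ∈ Finset.Icc 1 Q, ∑ p ∈ Finset.Icc 1 P, (χa q φ * T q p ^ 2) * χs p s := by
    intro φ s
    have hgs : g s φ = (δs ^ 2)⁻¹ * ∑ q ∈ Finset.Icc 1 Q, ∑ p ∈ Finset.Icc 1 P,
        (χs p s * χa q φ) * T q p := by
      simp only [hg_def]; exact hgrep s φ
    rw [hgs, mul_pow]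
    refine mul_le_mul_of_nonneg_left ?_ (sq_nonneg _)
    have hflat : ∑ q ∈ Finset.Icc 1 Q, ∑ p ∈ Finset.Icc 1 P, (χs p s * χa q φ) * T q p
        = ∑ qp ∈ Finset.Icc 1 Q ×ˢ Finset.Icc 1 P,
            (χs qp.2 s * χa qp.1 φ) * T qp.1 qp.2 :=
      (Finset.sum_product' (Finset.Icc 1 Q) (Finset.Icc 1 P) (fun q p => (χs p s * χa q φ) * T q p)).symm
    have hflat2 : ∑ qp ∈ Finset.Icc 1 Q ×ˢ Finset.Icc 1 P,
            (χs qp.2 s * χa qp.1 φ) * T qp.1 qp.2 ^ 2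
        = ∑ q ∈ Finset.Icc 1 Q, ∑ p ∈ Finset.Icc 1 P, (χs p s * χa q φ) * T q p ^ 2 :=
      Finset.sum_product' (Finset.Icc 1 Q) (Finset.Icc 1 P) (fun q p => (χs p s * χa q φ) * T q p ^ 2)
    have hc01 : ∀ qp ∈ Finset.Icc 1 Q ×ˢ Finset.Icc 1 P,
        χs qp.2 s * χa qp.1 φ = 0 ∨ χs qp.2 s * χa qp.1 φ = 1 := by
      intro qp _
      by_cases h1 : s ∈ sCell δs P qp.2 <;> by_cases h2 : φ ∈ angCell φs qp.1 <;>
        simp [hχs, hχa, Set.indicator_of_mem, Set.indicator_of_notMem, h1, h2]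
    have hsum1 : ∑ qp ∈ Finset.Icc 1 Q ×ˢ Finset.Icc 1 P, χs qp.2 s * χa qp.1 φ ≤ 1 := by
      rw [Finset.sum_product' (Finset.Icc 1 Q) (Finset.Icc 1 P) (fun q p => χs p s * χa q φ)]
      have e1 : ∑ q ∈ Finset.Icc 1 Q, ∑ p ∈ Finset.Icc 1 P, χs p s * χa q φ
          = (∑ p ∈ Finset.Icc 1 P, χs p s) * ∑ q ∈ Finset.Icc 1 Q, χa q φ := by
        rw [Finset.sum_comm]
        rw [← Finset.sum_mul_sum]
      rw [e1]
      have ha := aux_sCell_sum_le_one hδs P s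
      have hb := aux_ang_sum_le_one hang φ
      have ha' : ∑ p ∈ Finset.Icc 1 P, χs p s ≤ 1 := by simp only [hχs]; exact ha
      have hb' : ∑ q ∈ Finset.Icc 1 Q, χa q φ ≤ 1 := by simp only [hχa]; exact hb
      have ha0 : 0 ≤ ∑ p ∈ Finset.Icc 1 P, χs p s :=
        Finset.sum_nonneg fun p _ => hχs0 p s
      have hb0 : 0 ≤ ∑ q ∈ Finset.Icc 1 Q, χa q φ :=
        Finset.sum_nonneg fun q _ => hχa0 q φ
      nlinarith
    calc (∑ q ∈ Finset.Icc 1 Q, ∑ p ∈ Finset.Icc 1 P, (χs p s * χa q φ) * T q p) ^ 2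
        = (∑ qp ∈ Finset.Icc 1 Q ×ˢ Finset.Icc 1 P,
            (χs qp.2 s * χa qp.1 φ) * T qp.1 qp.2) ^ 2 := by rw [hflat]
      _ ≤ ∑ qp ∈ Finset.Icc 1 Q ×ˢ Finset.Icc 1 P,
            (χs qp.2 s * χa qp.1 φ) * T qp.1 qp.2 ^ 2 :=
          aux_cs _ _ _ hc01 hsum1
      _ = ∑ q ∈ Finset.Icc 1 Q, ∑ p ∈ Finset.Icc 1 P, (χs p s * χa q φ) * T q p ^ 2 :=
          hflat2
      _ = ∑ q ∈ Finset.Icc 1 Q, ∑ p ∈ Finset.Icc 1 P, (χa q φ * T q p ^ 2) * χs p s := by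
          refine Finset.sum_congr rfl fun q _ => Finset.sum_congr rfl fun p _ => by ring
  set B := ((δs ^ 2)⁻¹) ^ 2 * (δs * K) with hB_def
  have hinner : ∀ φ, ∫ s in Ioo (-1 : ℝ) 1, g s φ ^ 2 ≤ B := by
    intro φ
    have hHint : ∀ q ∈ Finset.Icc 1 Q, ∀ p ∈ Finset.Icc 1 P,
        MeasureTheory.IntegrableOn (fun s => (χa q φ * T q p ^ 2) * χs p s)
          (Ioo (-1 : ℝ) 1) volume := by
      intro q _ p _
      simp only [hχs]
      exact (aux_intOn_ind (show MeasurableSet (sCell δs P p) from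
        measurableSet_Ico)).const_mul (χa q φ * T q p ^ 2)
    have hHint2 : MeasureTheory.IntegrableOn
        (fun s => ((δs ^ 2)⁻¹) ^ 2 * ∑ q ∈ Finset.Icc 1 Q, ∑ p ∈ Finset.Icc 1 P,
          (χa q φ * T q p ^ 2) * χs p s) (Ioo (-1 : ℝ) 1) volume := by
      refine MeasureTheory.Integrable.const_mul ?_ _
      refine MeasureTheory.integrable_finset_sum _ fun q hq => ?_
      exact MeasureTheory.integrable_finset_sum _ fun p hp => hHint q hq p hp
    have hgmeas : Measurable fun s => g s φ := by
      have he : (fun s => g s φ) = fun s =>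
          (δs ^ 2)⁻¹ * ∑ q ∈ Finset.Icc 1 Q, ∑ p ∈ Finset.Icc 1 P,
            (χs p s * χa q φ) * T q p := by
        funext s
        simp only [hg_def]
        exact hgrep s φ
      rw [he]
      refine Measurable.const_mul ?_ _
      refine Finset.measurable_sum _ fun q _ => ?_
      refine Finset.measurable_sum _ fun p _ => ?_
      simp only [hχs]
      exact ((measurable_const.indicator measurableSet_Ico).mul_const _).mul_const _
    have hIg : MeasureTheory.IntegrableOn (fun s => g s φ ^ 2) (Ioo (-1 : ℝ) 1) volume := by
      refine MeasureTheory.Integrable.mono' hHint2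
        ((hgmeas.pow_const 2).aestronglyMeasurable) (MeasureTheory.ae_of_all _ fun s => ?_)
      simp only [Real.norm_eq_abs]
      rw [abs_of_nonneg (sq_nonneg _)]
      exact hptws φ s
    calc ∫ s in Ioo (-1 : ℝ) 1, g s φ ^ 2
        ≤ ∫ s in Ioo (-1 : ℝ) 1, ((δs ^ 2)⁻¹) ^ 2 *
            ∑ q ∈ Finset.Icc 1 Q, ∑ p ∈ Finset.Icc 1 P, (χa q φ * T q p ^ 2) * χs p s :=
          MeasureTheory.setIntegral_mono_on hIg hHint2 measurableSet_Ioo fun s _ => hptws φ s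
      _ = ((δs ^ 2)⁻¹) ^ 2 * ∑ q ∈ Finset.Icc 1 Q, ∑ p ∈ Finset.Icc 1 P,
            (χa q φ * T q p ^ 2) * ∫ s in Ioo (-1 : ℝ) 1, χs p s := by
          rw [MeasureTheory.integral_const_mul]
          congr 1
          rw [MeasureTheory.integral_finset_sum _ (fun q hq =>
            MeasureTheory.integrable_finset_sum _ (fun p hp => hHint q hq p hp))]
          refine Finset.sum_congr rfl fun q hq => ?_
          rw [MeasureTheory.integral_finset_sum _ (fun p hp => hHint q hq p hp)]
          exact Finset.sum_congr rfl fun p hp => MeasureTheory.integral_const_mul _ _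
      _ ≤ B := by
          rw [hB_def]
          refine mul_le_mul_of_nonneg_left ?_ (sq_nonneg _)
          calc ∑ q ∈ Finset.Icc 1 Q, ∑ p ∈ Finset.Icc 1 P,
                (χa q φ * T q p ^ 2) * ∫ s in Ioo (-1 : ℝ) 1, χs p s
              ≤ ∑ q ∈ Finset.Icc 1 Q, ∑ p ∈ Finset.Icc 1 P,
                  (χa q φ * T q p ^ 2) * δs := by
                refine Finset.sum_le_sum fun q _ => Finset.sum_le_sum fun p _ => ?_
                refine mul_le_mul_of_nonneg_left ?_
                  (mul_nonneg (hχa0 q φ) (sq_nonneg _))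
                simp only [hχs]
                exact aux_sCell_integral hδs P p
            _ = ∑ q ∈ Finset.Icc 1 Q, (χa q φ * δs) * ∑ p ∈ Finset.Icc 1 P, T q p ^ 2 := by
                refine Finset.sum_congr rfl fun q _ => ?_
                rw [Finset.mul_sum]
                exact Finset.sum_congr rfl fun p _ => by ring
            _ ≤ ∑ q ∈ Finset.Icc 1 Q, (χa q φ * δs) * K := by
                refine Finset.sum_le_sum fun q _ => ?_
                exact mul_le_mul_of_nonneg_left (hKsum q)
                  (mul_nonneg (hχa0 q φ) hδs.le)
            _ = (∑ q ∈ Finset.Icc 1 Q, χa q φ) * (δs * K) := by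
                rw [Finset.sum_mul]
                exact Finset.sum_congr rfl fun q _ => by ring
            _ ≤ δs * K := by
                refine mul_le_of_le_one_left (mul_nonneg hδs.le hK0) ?_
                have hb := aux_ang_sum_le_one hang φ
                simp only [hχa]
                exact hb
  have hiioc : volume (Ioc (-π) π) < ⊤ := by
    rw [Real.volume_Ioc]; exact ENNReal.ofReal_lt_top
  have houter : ∫ φ in Ioc (-π) π, ∫ s in Ioo (-1 : ℝ) 1, g s φ ^ 2 ≤ 2 * π * B := by
    calc ∫ φ in Ioc (-π) π, ∫ s in Ioo (-1 : ℝ) 1, g s φ ^ 2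
        ≤ ∫ _φ in Ioc (-π) π, B :=
          MeasureTheory.integral_mono_of_nonneg
            (MeasureTheory.ae_of_all _ fun φ =>
              MeasureTheory.integral_nonneg fun s => sq_nonneg _)
            (MeasureTheory.integrableOn_const hiioc.ne)
            (MeasureTheory.ae_of_all _ fun φ => hinner φ)
      _ = 2 * π * B := by
          rw [MeasureTheory.setIntegral_const, smul_eq_mul, measureReal_def, Real.volume_Ioc,
            ENNReal.toReal_ofReal (by linarith)]
          ring
  have hsq : ∫ φ in Ioc (-π) π, ∫ s in Ioo (-1 : ℝ) 1, g s φ ^ 2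
      ≤ (Real.sqrt (80 * π) * Real.sqrt (1 + t) * t) ^ 2 * F := by
    refine le_trans houter ?_
    have hrhs : (Real.sqrt (80 * π) * Real.sqrt (1 + t) * t) ^ 2 * F
        = 80 * π * ((1 + t) * (t ^ 2 * F)) := by
      rw [mul_pow, mul_pow, Real.sq_sqrt (by positivity), Real.sq_sqrt (by linarith)]
      ring
    rw [hrhs, hB_def, hK_def]
    have hδxt : δx = t * δs := by rw [ht_def]; field_simp
    rcases le_total δx δs with hc | hc
    · have hmx : m = δx := by rw [hm_def]; exact min_eq_left hc
      have ht1 : t ≤ 1 := by rw [ht_def]; exact (div_le_one hδs).mpr hc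
      have he : ((δs ^ 2)⁻¹) ^ 2 * (δs * (m ^ 2 * (8 * w') * ((3 + 2 * t) * F)))
          = 8 * (t ^ 2 * (1 + t)) * ((3 + 2 * t) * F) := by
        rw [hmx, hw'_def, hδxt]
        have hδs0 : δs ≠ 0 := ne_of_gt hδs
        field_simp
      rw [he]
      have hA0 : 0 ≤ π * (t ^ 2 * ((1 + t) * F)) :=
        mul_nonneg hπ.le (mul_nonneg (sq_nonneg t)
          (mul_nonneg (by linarith) hF0))
      nlinarith [mul_nonneg hA0 (by linarith : (0 : ℝ) ≤ 1 - t)]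
    · have hmx : m = δs := by rw [hm_def]; exact min_eq_right hc
      have ht1 : 1 ≤ t := by rw [ht_def]; exact (one_le_div hδs).mpr hc
      have he : ((δs ^ 2)⁻¹) ^ 2 * (δs * (m ^ 2 * (8 * w') * ((3 + 2 * t) * F)))
          = 8 * (1 + t) * ((3 + 2 * t) * F) := by
        rw [hmx, hw'_def, hδxt]
        have hδs0 : δs ≠ 0 := ne_of_gt hδs
        field_simp
      rw [he]
      have hA0 : 0 ≤ π * ((1 + t) * F) :=
        mul_nonneg hπ.le (mul_nonneg (by linarith) hF0)
      nlinarith [mul_nonneg hA0 (by nlinarith [sq_nonneg (t - 1)] :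
        (0 : ℝ) ≤ 5 * t ^ 2 - 2 * t - 3)]
  have hI0 : 0 ≤ ∫ φ in Ioc (-π) π, ∫ s in Ioo (-1 : ℝ) 1, g s φ ^ 2 :=
    MeasureTheory.integral_nonneg fun φ => MeasureTheory.integral_nonneg fun s => sq_nonneg _
  have hgoal : nSinoD g ≤ Real.sqrt (80 * π) * Real.sqrt (1 + t) * t * nImg f := by
    unfold nSinoD nImg
    rw [← hF_def, ← Real.sqrt_eq_rpow, ← Real.sqrt_eq_rpow]
    have ha0 : 0 ≤ Real.sqrt (80 * π) * Real.sqrt (1 + t) * t :=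
      mul_nonneg (mul_nonneg (Real.sqrt_nonneg _) (Real.sqrt_nonneg _)) ht0
    calc Real.sqrt (∫ φ in Ioc (-π) π, ∫ s in Ioo (-1 : ℝ) 1, g s φ ^ 2)
        ≤ Real.sqrt ((Real.sqrt (80 * π) * Real.sqrt (1 + t) * t) ^ 2 * F) :=
          Real.sqrt_le_sqrt hsq
      _ = Real.sqrt (80 * π) * Real.sqrt (1 + t) * t * Real.sqrt F := by
          rw [Real.sqrt_mul (sq_nonneg _) F, Real.sqrt_sq ha0]
  exact hgoal

end
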